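/- Let S ≥ 1 and k ≥ 0 be integers and let x ∈ [0,1] be a real number. Then the (k+1)×(k+1) Hankel matrix with (i,j)-entry x^{i+j}·(i+j)!/(S+i+j)! − x^{i+j+1}·(i+j+1)!/(S+i+j+1)!, for 0 ≤ i,j ≤ k, is positive semidefinite; that is, Σ_{i,j=0}^{k} p_i p_j [ x^{i+j}(i+j)!/(S+i+j)! − x^{i+j+1}(i+j+1)!/(S+i+j+1)! ] ≥ 0 for every p ∈ ℝ^{k+1}. -/

import Mathlib

lemma contA (n m : ℕ) : Continuous fun t : ℝ => t ^ n * (1 - t) ^ m :=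
  (continuous_pow n).mul ((continuous_const.sub continuous_id).pow m)

open intervalIntegral in
lemma beta_nat (m : ℕ) : ∀ n : ℕ,
    (∫ t in (0:ℝ)..1, t ^ n * (1 - t) ^ m) =
      (Nat.factorial n : ℝ) * (Nat.factorial m) / (Nat.factorial (n + m + 1)) := by
  induction m with
  | zero =>
    intro n
    have hf : (Nat.factorial n : ℝ) ≠ 0 := by exact_mod_cast Nat.factorial_ne_zero n
    have h1 : ((n:ℝ) + 1) ≠ 0 := by positivity
    simp only [pow_zero, mul_one, integral_pow, one_pow, zero_pow (Nat.succ_ne_zero n),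
      Nat.factorial_succ, Nat.factorial_zero]
    push_cast
    field_simp
    norm_num
  | succ m ih =>
    intro n
    have hu : ∀ t ∈ Set.uIcc (0:ℝ) 1,
        HasDerivAt (fun t : ℝ => (1 - t) ^ (m + 1))
          (-(((m:ℝ) + 1) * (1 - t) ^ m)) t := by
      intro t _
      have h := ((hasDerivAt_id t).const_sub 1).pow (m + 1)
      simp only [id_eq, Nat.add_sub_cancel] at h
      refine h.congr_deriv ?_
      push_cast
      ring
    have hv : ∀ t ∈ Set.uIcc (0:ℝ) 1,
        HasDerivAt (fun t : ℝ => t ^ (n + 1) / (n + 1)) (t ^ n) t := by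
      intro t _
      have h := (hasDerivAt_pow (n + 1) t).div_const (n + 1)
      refine h.congr_deriv ?_
      have : ((n:ℝ) + 1) ≠ 0 := by positivity
      rw [Nat.add_sub_cancel]
      push_cast
      field_simp
    have hparts := integral_mul_deriv_eq_deriv_mul hu hv
      ((continuous_const.mul ((continuous_const.sub continuous_id).pow m)).neg.intervalIntegrable _ _)
      ((continuous_pow n).intervalIntegrable _ _)
    have hcomm : (∫ t in (0:ℝ)..1, t ^ n * (1 - t) ^ (m + 1))
        = ∫ t in (0:ℝ)..1, (1 - t) ^ (m + 1) * t ^ n := by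
      congr 1; ext t; ring
    rw [hcomm, hparts]
    simp only [sub_self, zero_pow (Nat.succ_ne_zero m), one_pow, zero_mul, mul_zero,
      sub_zero, zero_div, zero_sub, neg_sub, zero_mul]
    have hstep : (∫ t in (0:ℝ)..1, -(((m:ℝ) + 1) * (1 - t) ^ m) * (t ^ (n + 1) / (n + 1)))
        = -(((m:ℝ) + 1) / (n + 1)) * ∫ t in (0:ℝ)..1, t ^ (n + 1) * (1 - t) ^ m := by
      rw [← integral_const_mul]
      congr 1; ext t; ring
    rw [hstep, ih (n + 1)]
    have h1 : ((n:ℝ) + 1) ≠ 0 := by positivity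
    have h2 : (Nat.factorial (n + 1 + m + 1) : ℝ) ≠ 0 := by
      exact_mod_cast Nat.factorial_ne_zero _
    have he : n + (m + 1) + 1 = n + 1 + m + 1 := by ring
    rw [he, Nat.factorial_succ n, Nat.factorial_succ m]
    push_cast
    field_simp
    rw [zero_pow (Nat.succ_ne_zero n)]
    ring

lemma key_nonneg (S k : ℕ) (hS : 1 ≤ S) (x : ℝ) (hx : x ∈ Set.Icc (0 : ℝ) 1)
    (p : Fin (k + 1) → ℝ) :
    0 ≤ ∑ i : Fin (k + 1), ∑ j : Fin (k + 1), p i * p j *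
        (x ^ ((i : ℕ) + (j : ℕ)) * ((Nat.factorial ((i : ℕ) + (j : ℕ)) : ℝ) /
            (Nat.factorial (S + (i : ℕ) + (j : ℕ)) : ℝ)) -
          x ^ ((i : ℕ) + (j : ℕ) + 1) * ((Nat.factorial ((i : ℕ) + (j : ℕ) + 1) : ℝ) /
            (Nat.factorial (S + (i : ℕ) + (j : ℕ) + 1) : ℝ))) := by
  obtain ⟨hx0, hx1⟩ := hx
  obtain ⟨s, rfl⟩ : ∃ s, S = s + 1 := ⟨S - 1, (Nat.succ_pred_eq_of_pos hS).symm⟩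
  set g : ℝ → ℝ := fun t => (∑ i : Fin (k + 1), p i * (x * t) ^ (i : ℕ)) ^ 2 *
      ((1 - x * t) * (1 - t) ^ s) with hg
  have hgnonneg : ∀ t ∈ Set.Icc (0:ℝ) 1, 0 ≤ g t := by
    intro t ht
    have h1 : 0 ≤ 1 - x * t := by nlinarith [ht.1, ht.2]
    have h2 : 0 ≤ (1 - t) ^ s := by
      apply pow_nonneg; linarith [ht.2]
    have h3 : 0 ≤ (∑ i : Fin (k + 1), p i * (x * t) ^ (i : ℕ)) ^ 2 := sq_nonneg _
    rw [hg]
    positivity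
  have hint : 0 ≤ ∫ t in (0:ℝ)..1, g t :=
    intervalIntegral.integral_nonneg zero_le_one (fun t ht => hgnonneg t ht)
  have hgeq : ∀ t : ℝ, g t = ∑ i : Fin (k + 1), ∑ j : Fin (k + 1), p i * p j *
      (x ^ ((i:ℕ) + (j:ℕ)) * (t ^ ((i:ℕ) + (j:ℕ)) * (1 - t) ^ s) -
       x ^ ((i:ℕ) + (j:ℕ) + 1) * (t ^ ((i:ℕ) + (j:ℕ) + 1) * (1 - t) ^ s)) := by
    intro t
    rw [hg]
    simp only [sq]
    rw [Finset.sum_mul_sum, Finset.sum_mul]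
    apply Finset.sum_congr rfl; intro i _
    rw [Finset.sum_mul]
    apply Finset.sum_congr rfl; intro j _
    rw [pow_add x, pow_add t, pow_succ x, pow_succ t, mul_pow, mul_pow]
    ring
  have hswap : (∫ t in (0:ℝ)..1, g t) = ∑ i : Fin (k + 1), ∑ j : Fin (k + 1), p i * p j *
      (x ^ ((i:ℕ) + (j:ℕ)) * (∫ t in (0:ℝ)..1, t ^ ((i:ℕ) + (j:ℕ)) * (1 - t) ^ s) -
       x ^ ((i:ℕ) + (j:ℕ) + 1) * (∫ t in (0:ℝ)..1, t ^ ((i:ℕ) + (j:ℕ) + 1) * (1 - t) ^ s)) := by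
    simp only [hgeq]
    rw [intervalIntegral.integral_finset_sum]
    · apply Finset.sum_congr rfl; intro i _
      rw [intervalIntegral.integral_finset_sum]
      · apply Finset.sum_congr rfl; intro j _
        rw [intervalIntegral.integral_const_mul, intervalIntegral.integral_sub,
          intervalIntegral.integral_const_mul, intervalIntegral.integral_const_mul]
        · exact (continuous_const.mul (contA _ s)).intervalIntegrable _ _
        · exact (continuous_const.mul (contA _ s)).intervalIntegrable _ _
      · intro j _
        exact (continuous_const.mul ((continuous_const.mul (contA _ s)).sub
          (continuous_const.mul (contA _ s)))).intervalIntegrable _ _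
    · intro i _
      apply Continuous.intervalIntegrable
      apply continuous_finset_sum
      intro j _
      exact continuous_const.mul ((continuous_const.mul (contA _ s)).sub (continuous_const.mul (contA _ s)))
  rw [hswap] at hint
  simp only [beta_nat] at hint
  have hfac : (0:ℝ) < (Nat.factorial s : ℝ) := by exact_mod_cast Nat.factorial_pos s
  have key : (∑ i : Fin (k + 1), ∑ j : Fin (k + 1), p i * p j *
        (x ^ ((i : ℕ) + (j : ℕ)) * ((Nat.factorial ((i : ℕ) + (j : ℕ)) : ℝ) /
            (Nat.factorial ((s + 1) + (i : ℕ) + (j : ℕ)) : ℝ)) -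
          x ^ ((i : ℕ) + (j : ℕ) + 1) * ((Nat.factorial ((i : ℕ) + (j : ℕ) + 1) : ℝ) /
            (Nat.factorial ((s + 1) + (i : ℕ) + (j : ℕ) + 1) : ℝ)))) * (Nat.factorial s : ℝ)
      = ∑ i : Fin (k + 1), ∑ j : Fin (k + 1), p i * p j *
      (x ^ ((i:ℕ) + (j:ℕ)) * ((Nat.factorial ((i:ℕ)+(j:ℕ)) : ℝ) * (Nat.factorial s) /
          (Nat.factorial ((i:ℕ)+(j:ℕ) + s + 1))) -
       x ^ ((i:ℕ) + (j:ℕ) + 1) * ((Nat.factorial ((i:ℕ)+(j:ℕ)+1) : ℝ) * (Nat.factorial s) /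
          (Nat.factorial ((i:ℕ)+(j:ℕ)+1 + s + 1)))) := by
    rw [Finset.sum_mul]
    apply Finset.sum_congr rfl; intro i _
    rw [Finset.sum_mul]
    apply Finset.sum_congr rfl; intro j _
    have e1 : (s + 1) + (i:ℕ) + (j:ℕ) = (i:ℕ) + (j:ℕ) + s + 1 := by ring
    have e2 : (s + 1) + (i:ℕ) + (j:ℕ) + 1 = (i:ℕ) + (j:ℕ) + 1 + s + 1 := by ring
    rw [e1]
    rw [show (i:ℕ)+(j:ℕ)+s+1+1 = (i:ℕ)+(j:ℕ)+1+s+1 from by ring]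
    ring
  rw [← key] at hint
  exact le_of_mul_le_mul_right (by linarith [hint]) hfac

/-- for integers `S ≥ 1`, `k ≥ 0` and real `x ∈ [0,1]`, the Hankel matrix
with entries `x^{i+j}(i+j)!/(S+i+j)! − x^{i+j+1}(i+j+1)!/(S+i+j+1)!` is positive
semidefinite: `Σ_{i,j} p_i p_j [ … ] ≥ 0` for every `p ∈ ℝ^{k+1}`. -/
theorem hankel_difference_posSemidef
    (S k : ℕ) (hS : 1 ≤ S) (x : ℝ) (hx : x ∈ Set.Icc (0 : ℝ) 1) :
    (Matrix.of (fun i j : Fin (k + 1) =>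
        x ^ ((i : ℕ) + (j : ℕ)) * ((Nat.factorial ((i : ℕ) + (j : ℕ)) : ℝ) /
            (Nat.factorial (S + (i : ℕ) + (j : ℕ)) : ℝ)) -
          x ^ ((i : ℕ) + (j : ℕ) + 1) * ((Nat.factorial ((i : ℕ) + (j : ℕ) + 1) : ℝ) /
            (Nat.factorial (S + (i : ℕ) + (j : ℕ) + 1) : ℝ)))).PosSemidef ∧
    ∀ p : Fin (k + 1) → ℝ,
      0 ≤ ∑ i : Fin (k + 1), ∑ j : Fin (k + 1), p i * p j *
        (x ^ ((i : ℕ) + (j : ℕ)) * ((Nat.factorial ((i : ℕ) + (j : ℕ)) : ℝ) /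
            (Nat.factorial (S + (i : ℕ) + (j : ℕ)) : ℝ)) -
          x ^ ((i : ℕ) + (j : ℕ) + 1) * ((Nat.factorial ((i : ℕ) + (j : ℕ) + 1) : ℝ) /
            (Nat.factorial (S + (i : ℕ) + (j : ℕ) + 1) : ℝ))) := by
  constructor
  · rw [Matrix.posSemidef_iff_dotProduct_mulVec]
    constructor
    · ext i j
      simp only [Matrix.conjTranspose_apply, Matrix.of_apply, star_trivial]
      have e1 : (j:ℕ) + (i:ℕ) = (i:ℕ) + (j:ℕ) := by ring
      have e2 : S + (j:ℕ) + (i:ℕ) = S + (i:ℕ) + (j:ℕ) := by ring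
      rw [e1, e2]
    · intro p
      have h := key_nonneg S k hS x hx p
      refine h.trans_eq (Eq.symm ?_)
      simp only [dotProduct, Matrix.mulVec, Matrix.of_apply, star_trivial,
        Pi.star_apply, Finset.mul_sum]
      apply Finset.sum_congr rfl; intro i _
      apply Finset.sum_congr rfl; intro j _
      ring
  · exact key_nonneg S k hS x hx
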